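/- Let X, Y be Hilbert spaces, A : X → Y a bounded linear operator with ‖A*A‖ ≤ 1, β > −1, and let x† be the minimum-norm solution of Ax = y with y = A x†. Suppose for each δ > 0 we are given data y^δ ∈ Y with ‖y − y^δ‖ ≤ δ and a stopping index k(δ) ∈ ℕ such that k(δ) → ∞ and δ · k(δ) → 0 as δ → 0. Then the Nesterov iterates computed from y^δ satisfy ‖x_{k(δ)}^δ − x†‖ → 0 as δ → 0. -/

import Mathlib

/-- Momentum sequence `α_k = (k-1)/(k+β)`. -/
noncomputable def nesterovAlpha (β : ℝ) (k : ℕ) : ℝ := ((k : ℝ) - 1) / ((k : ℝ) + β)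

/-- Nesterov's accelerated Landweber iteration for the equation `A x = y`:
`x_0 = 0`, `x_1 = A* y`, and `x_{k+1} = z_k + A*(y - A z_k)` where
`z_k = x_k + α_k (x_k - x_{k-1})`. -/
noncomputable def nesterovIter {X Y : Type*} [NormedAddCommGroup X] [InnerProductSpace ℝ X]
    [CompleteSpace X] [NormedAddCommGroup Y] [InnerProductSpace ℝ Y] [CompleteSpace Y]
    (β : ℝ) (A : X →L[ℝ] Y) (y : Y) : ℕ → X
  | 0 => 0
  | 1 => ContinuousLinearMap.adjoint A y
  | (k + 2) =>
      let z := nesterovIter β A y (k + 1) +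
        nesterovAlpha β (k + 1) • (nesterovIter β A y (k + 1) - nesterovIter β A y k)
      z + ContinuousLinearMap.adjoint A (y - A z)

open RealInnerProductSpace

/-- modified momentum: `0` at `k = 0`. -/
noncomputable def myAlpha (β : ℝ) (k : ℕ) : ℝ := if k = 0 then 0 else nesterovAlpha β k

lemma myAlpha_nonneg (β : ℝ) (hβ : -1 < β) (k : ℕ) : 0 ≤ myAlpha β k := by
  cases k with
  | zero => simp [myAlpha]
  | succ j =>
    simp only [myAlpha, if_neg (Nat.succ_ne_zero j), nesterovAlpha]
    apply div_nonneg
    · push_cast; linarith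
    · have : (0:ℝ) ≤ (j:ℝ) := Nat.cast_nonneg j
      push_cast; linarith

lemma myAlpha_le_one (β : ℝ) (hβ : -1 < β) (k : ℕ) : myAlpha β k ≤ 1 := by
  cases k with
  | zero => simp [myAlpha]
  | succ j =>
    simp only [myAlpha, if_neg (Nat.succ_ne_zero j), nesterovAlpha]
    have hden : (0:ℝ) < (j:ℝ) + 1 + β := by
      have : (0:ℝ) ≤ (j:ℝ) := Nat.cast_nonneg j
      linarith
    rw [div_le_one (by push_cast; linarith)]
    push_cast; linarith

lemma myAlpha_ge (β : ℝ) (hβ : -1 < β) (k : ℕ) (hk : 2 ≤ k) :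
    1 / (2 + β) ≤ myAlpha β k := by
  obtain ⟨j, rfl⟩ : ∃ j, k = j + 2 := ⟨k - 2, by omega⟩
  simp only [myAlpha, if_neg (Nat.succ_ne_zero _), nesterovAlpha]
  have hj : (0:ℝ) ≤ (j:ℝ) := Nat.cast_nonneg j
  have h1 : (0:ℝ) < 2 + β := by linarith
  have h2 : (0:ℝ) < (j:ℝ) + 2 + β := by linarith
  rw [div_le_div_iff₀ h1 (by push_cast; linarith)]
  push_cast
  nlinarith

/-- A bundled selfadjoint operator with `0 ≤ B ≤ I`. -/
structure PosContr (Z : Type*) [NormedAddCommGroup Z] [InnerProductSpace ℝ Z] where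
  B : Z →L[ℝ] Z
  hsym : ∀ u v : Z, ⟪B u, v⟫ = ⟪u, B v⟫
  hpos : ∀ u : Z, 0 ≤ ⟪B u, u⟫
  hle : ∀ u : Z, ⟪B u, u⟫ ≤ ‖u‖ ^ 2

section Abstract

variable {Z : Type*} [NormedAddCommGroup Z] [InnerProductSpace ℝ Z]

namespace PosContr

variable (P : PosContr Z)

lemma psd_cs (u v : Z) : ⟪P.B u, v⟫ ^ 2 ≤ ⟪P.B u, u⟫ * ⟪P.B v, v⟫ := by
  have hquad : ∀ t : ℝ, 0 ≤ ⟪P.B v, v⟫ * (t * t) + (2 * ⟪P.B u, v⟫) * t + ⟪P.B u, u⟫ := by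
    intro t
    have h0 := P.hpos (u + t • v)
    have hexp : ⟪P.B (u + t • v), u + t • v⟫ =
        ⟪P.B v, v⟫ * (t * t) + (2 * ⟪P.B u, v⟫) * t + ⟪P.B u, u⟫ := by
      have hvu : ⟪P.B v, u⟫ = ⟪P.B u, v⟫ := by
        rw [P.hsym v u, real_inner_comm]
      simp only [map_add, map_smul, inner_add_left, inner_add_right,
        inner_smul_left, inner_smul_right, conj_trivial]
      rw [hvu]; ring
    linarith [hexp ▸ h0]
  have hd : discrim (⟪P.B v, v⟫) (2 * ⟪P.B u, v⟫) (⟪P.B u, u⟫) ≤ 0 :=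
    discrim_le_zero hquad
  simp only [discrim] at hd
  nlinarith

lemma normB_sq_le (u : Z) : ‖P.B u‖ ^ 2 ≤ ⟪P.B u, u⟫ := by
  rcases eq_or_ne (P.B u) 0 with h | h
  · simp [h, P.hpos u]
  · have h1 := P.psd_cs u (P.B u)
    have h2 : ⟪P.B (P.B u), P.B u⟫ ≤ ‖P.B u‖ ^ 2 := P.hle _
    have h3 : ⟪P.B u, P.B u⟫ = ‖P.B u‖ ^ 2 := real_inner_self_eq_norm_sq _
    have h4 : (0:ℝ) < ‖P.B u‖ ^ 2 := by
      have : 0 < ‖P.B u‖ := norm_pos_iff.mpr h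
      positivity
    have h5 : 0 ≤ ⟪P.B (P.B u), P.B u⟫ := P.hpos _
    have h6 : 0 ≤ ⟪P.B u, u⟫ := P.hpos u
    nlinarith [mul_le_mul_of_nonneg_left h2 h6]

lemma normB_le (u : Z) : ‖P.B u‖ ≤ ‖u‖ := by
  have h1 := P.normB_sq_le u
  have h2 := P.hle u
  nlinarith [norm_nonneg (P.B u), norm_nonneg u]

/-- the complementary operator `I - B` -/
noncomputable def compl : PosContr Z where
  B := ContinuousLinearMap.id ℝ Z - P.B
  hsym := by
    intro u v
    simp only [ContinuousLinearMap.sub_apply, ContinuousLinearMap.id_apply,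
      inner_sub_left, inner_sub_right, P.hsym]
  hpos := by
    intro u
    have := P.hle u
    simp only [ContinuousLinearMap.sub_apply, ContinuousLinearMap.id_apply, inner_sub_left,
      real_inner_self_eq_norm_sq]
    linarith
  hle := by
    intro u
    have := P.hpos u
    simp only [ContinuousLinearMap.sub_apply, ContinuousLinearMap.id_apply, inner_sub_left,
      real_inner_self_eq_norm_sq]
    linarith

lemma normIB_le (u : Z) : ‖u - P.B u‖ ≤ ‖u‖ := by
  have := P.compl.normB_le u
  simpa [PosContr.compl] using this

end PosContr

end Abstract
section Sequences

variable {Z : Type*} [NormedAddCommGroup Z] [InnerProductSpace ℝ Z]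

/-- The pair `(E_k, S_k)` of the transformed error system. -/
noncomputable def esP (P : PosContr Z) (β : ℝ) (x : Z) : ℕ → Z × Z
  | 0 => (x, 0)
  | k + 1 =>
      let p := esP P β x k
      let w := p.1 + myAlpha β k • P.B p.2
      (w - P.B w, -p.1 + myAlpha β k • (p.2 - P.B p.2))

/-- The pair `(D_k, D_{k-1})` of the forced (noise) system. -/
noncomputable def ddP (P : PosContr Z) (β : ℝ) (η : Z) : ℕ → Z × Z
  | 0 => (0, 0)
  | k + 1 =>
      let p := ddP P β η k
      let ζ := p.1 + myAlpha β k • (p.1 - p.2)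
      (ζ - P.B ζ + η, p.1)

namespace PosContr

variable (P : PosContr Z)

/-- The fundamental one-step energy identity. -/
lemma key_eq (E S : Z) (a : ℝ) :
    ‖(E + a • P.B S) - P.B (E + a • P.B S)‖ ^ 2
      + ⟪P.B (-E + a • (S - P.B S)), -E + a • (S - P.B S)⟫
      + ((⟪P.B (E + a • P.B S), E + a • P.B S⟫ - ‖P.B (E + a • P.B S)‖ ^ 2)
        + (1 - a ^ 2) * ⟪P.B S, S⟫ + a ^ 2 * ‖P.B S‖ ^ 2)
    = ‖E‖ ^ 2 + ⟪P.B S, S⟫ := by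
  set u := P.B S with hu
  set w := E + a • u with hw
  -- canonical atoms
  have hBuE : ⟪P.B u, E⟫ = ⟪P.B E, u⟫ := by
    rw [P.hsym u E, real_inner_comm]
  have hBES : ⟪P.B E, S⟫ = ⟪E, u⟫ := P.hsym E S
  have hBuS : ⟪P.B u, S⟫ = ‖u‖ ^ 2 := by
    rw [P.hsym u S, ← hu, real_inner_self_eq_norm_sq]
  have huS : ⟪u, S⟫ = ⟪P.B S, S⟫ := rfl
  have hSu : ⟪S, u⟫ = ⟪P.B S, S⟫ := by rw [real_inner_comm]
  have huu : ⟪u, u⟫ = ‖u‖ ^ 2 := real_inner_self_eq_norm_sq _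
  have hEu : ⟪u, E⟫ = ⟪E, u⟫ := real_inner_comm _ _
  have hEE : ⟪E, E⟫ = ‖E‖ ^ 2 := real_inner_self_eq_norm_sq _
  -- Q5 : ‖w‖²
  have hQ5 : ‖w‖ ^ 2 = ‖E‖ ^ 2 + 2 * a * ⟪E, u⟫ + a ^ 2 * ‖u‖ ^ 2 := by
    rw [hw, norm_add_sq_real, inner_smul_right, norm_smul]
    simp only [mul_pow, Real.norm_eq_abs, sq_abs]
    try ring
  -- Q3 : ⟪Bw, w⟫
  have hQ3 : ⟪P.B w, w⟫ = ⟪P.B E, E⟫ + 2 * a * ⟪P.B E, u⟫ + a ^ 2 * ⟪P.B u, u⟫ := by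
    rw [hw]
    simp only [map_add, map_smul, inner_add_left, inner_add_right,
      inner_smul_left, inner_smul_right, conj_trivial]
    rw [hBuE]
    ring
  -- Q2 : ‖E'‖²  (E' = w - B w)
  have hQ2 : ‖w - P.B w‖ ^ 2 = ‖w‖ ^ 2 - 2 * ⟪P.B w, w⟫ + ‖P.B w‖ ^ 2 := by
    rw [norm_sub_sq_real, real_inner_comm]
  -- Q1 : ⟪B S', S'⟫
  have hQ1 : ⟪P.B (-E + a • (S - u)), -E + a • (S - u)⟫
      = ⟪P.B E, E⟫ - 2 * a * ⟪E, u⟫ + 2 * a * ⟪P.B E, u⟫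
        + a ^ 2 * (⟪P.B S, S⟫ - 2 * ‖u‖ ^ 2 + ⟪P.B u, u⟫) := by
    simp only [map_add, map_smul, map_neg, map_sub, inner_add_left, inner_add_right,
      inner_neg_left, inner_neg_right, inner_sub_left, inner_sub_right,
      inner_smul_left, inner_smul_right, conj_trivial]
    have h1 : ⟪P.B S, E⟫ = ⟪E, u⟫ := by rw [real_inner_comm]
    have h2 : ⟪P.B S, u⟫ = ‖u‖ ^ 2 := by rw [← hu, huu]
    simp only [hBuE, hBES, hBuS, hSu, huu, hEu, h1, h2]
    try ring
  rw [hQ2, hQ1, hQ3, hQ5]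
  ring

end PosContr

end Sequences
section Energy

variable {Z : Type*} [NormedAddCommGroup Z] [InnerProductSpace ℝ Z]

namespace PosContr

variable (P : PosContr Z) (β : ℝ) (x : Z)

noncomputable def Ek (k : ℕ) : Z := (esP P β x k).1
noncomputable def Sk (k : ℕ) : Z := (esP P β x k).2
noncomputable def wk (k : ℕ) : Z := P.Ek β x k + myAlpha β k • P.B (P.Sk β x k)
noncomputable def Hk (k : ℕ) : ℝ := ‖P.Ek β x k‖ ^ 2 + ⟪P.B (P.Sk β x k), P.Sk β x k⟫
noncomputable def dissk (k : ℕ) : ℝ :=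
  (⟪P.B (P.wk β x k), P.wk β x k⟫ - ‖P.B (P.wk β x k)‖ ^ 2)
    + (1 - myAlpha β k ^ 2) * ⟪P.B (P.Sk β x k), P.Sk β x k⟫
    + myAlpha β k ^ 2 * ‖P.B (P.Sk β x k)‖ ^ 2

lemma Ek_succ (k : ℕ) : P.Ek β x (k+1) = P.wk β x k - P.B (P.wk β x k) := rfl

lemma Sk_succ (k : ℕ) :
    P.Sk β x (k+1) = -(P.Ek β x k) + myAlpha β k • (P.Sk β x k - P.B (P.Sk β x k)) := rfl

lemma Ek_zero : P.Ek β x 0 = x := rfl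
lemma Sk_zero : P.Sk β x 0 = 0 := rfl

lemma H_step (k : ℕ) : P.Hk β x (k+1) + P.dissk β x k = P.Hk β x k := by
  have := P.key_eq (P.Ek β x k) (P.Sk β x k) (myAlpha β k)
  simpa [Hk, dissk, Ek_succ, Sk_succ, wk] using this

lemma diss_nonneg (hβ : -1 < β) (k : ℕ) : 0 ≤ P.dissk β x k := by
  have h1 := P.normB_sq_le (P.wk β x k)
  have h2 := P.hpos (P.Sk β x k)
  have h3 := myAlpha_nonneg β hβ k
  have h4 := myAlpha_le_one β hβ k
  have h5 : myAlpha β k ^ 2 ≤ 1 := by nlinarith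
  have h6 : (0:ℝ) ≤ ‖P.B (P.Sk β x k)‖ ^ 2 := by positivity
  unfold dissk
  nlinarith

lemma Hk_nonneg (k : ℕ) : 0 ≤ P.Hk β x k := by
  have := P.hpos (P.Sk β x k)
  have : (0:ℝ) ≤ ‖P.Ek β x k‖ ^ 2 := by positivity
  unfold Hk
  have := P.hpos (P.Sk β x k)
  linarith

lemma Hk_le (hβ : -1 < β) (k : ℕ) : P.Hk β x k ≤ ‖x‖ ^ 2 := by
  have h0 : P.Hk β x 0 = ‖x‖ ^ 2 := by
    simp [Hk, Ek_zero, Sk_zero]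
  induction k with
  | zero => exact le_of_eq h0
  | succ n ih =>
    have := P.H_step β x n
    have hd := P.diss_nonneg β x hβ n
    linarith

lemma Ek_norm_le (hβ : -1 < β) (k : ℕ) : ‖P.Ek β x k‖ ≤ ‖x‖ := by
  have h1 : ‖P.Ek β x k‖ ^ 2 ≤ ‖x‖ ^ 2 := by
    have := P.Hk_le β x hβ k
    have h2 := P.hpos (P.Sk β x k)
    simp only [Hk] at this
    linarith
  nlinarith [norm_nonneg (P.Ek β x k), norm_nonneg x]

lemma sum_diss (n : ℕ) :
    ∑ i ∈ Finset.range n, P.dissk β x i = P.Hk β x 0 - P.Hk β x n := by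
  induction n with
  | zero => simp
  | succ m ih =>
    rw [Finset.sum_range_succ, ih]
    have := P.H_step β x m
    linarith

lemma summable_diss (hβ : -1 < β) : Summable (P.dissk β x) := by
  apply summable_of_sum_range_le (c := ‖x‖ ^ 2) (P.diss_nonneg β x hβ)
  intro n
  rw [P.sum_diss β x n]
  have h1 := P.Hk_nonneg β x n
  have h2 := P.Hk_le β x hβ 0
  linarith

lemma diss_tendsto (hβ : -1 < β) : Filter.Tendsto (P.dissk β x) Filter.atTop (nhds 0) :=
  (P.summable_diss β x hβ).tendsto_atTop_zero

/-- `b k` : the (I-B)-weighted residual part of the dissipation. -/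
noncomputable def bk (k : ℕ) : ℝ := ⟪P.B (P.wk β x k), P.wk β x k⟫ - ‖P.B (P.wk β x k)‖ ^ 2

/-- `a k = ‖B S_k‖`. -/
noncomputable def ak (k : ℕ) : ℝ := ‖P.B (P.Sk β x k)‖

lemma bk_nonneg (k : ℕ) : 0 ≤ P.bk β x k := by
  have := P.normB_sq_le (P.wk β x k); unfold bk; linarith

lemma bk_le_diss (hβ : -1 < β) (k : ℕ) : P.bk β x k ≤ P.dissk β x k := by
  have h2 := P.hpos (P.Sk β x k)
  have h3 := myAlpha_nonneg β hβ k
  have h4 := myAlpha_le_one β hβ k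
  have h6 : (0:ℝ) ≤ ‖P.B (P.Sk β x k)‖ ^ 2 := by positivity
  unfold bk dissk
  have h8 : (0:ℝ) ≤ 1 - myAlpha β k ^ 2 := by nlinarith
  nlinarith [mul_nonneg h8 h2, mul_nonneg (sq_nonneg (myAlpha β k)) h6]

lemma bk_tendsto (hβ : -1 < β) : Filter.Tendsto (P.bk β x) Filter.atTop (nhds 0) :=
  squeeze_zero (P.bk_nonneg β x) (P.bk_le_diss β x hβ) (P.diss_tendsto β x hβ)

lemma ak_sq_le_diss (hβ : -1 < β) (k : ℕ) (hk : 2 ≤ k) :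
    (1 / (2 + β)) ^ 2 * P.ak β x k ^ 2 ≤ P.dissk β x k := by
  have h1 := myAlpha_ge β hβ k hk
  have h2 := myAlpha_nonneg β hβ k
  have hc : 0 < 1 / (2 + β) := by
    apply div_pos one_pos; linarith
  have h3 : (1 / (2 + β)) ^ 2 ≤ myAlpha β k ^ 2 := by nlinarith
  have h4 := P.bk_nonneg β x k
  have h5 := P.hpos (P.Sk β x k)
  have h6 := myAlpha_le_one β hβ k
  have h7 : (0:ℝ) ≤ P.ak β x k ^ 2 := by positivity
  unfold dissk
  unfold bk at h4
  unfold ak at h7 ⊢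
  have h8 : (0:ℝ) ≤ 1 - myAlpha β k ^ 2 := by nlinarith
  nlinarith [mul_le_mul_of_nonneg_right h3 h7, mul_nonneg h8 h5]

lemma ak_tendsto (hβ : -1 < β) : Filter.Tendsto (P.ak β x) Filter.atTop (nhds 0) := by
  have hc : 0 < (1 / (2 + β)) ^ 2 := by
    have : (0:ℝ) < 2 + β := by linarith
    positivity
  have hbound : ∀ k : ℕ, 2 ≤ k →
      P.ak β x k ≤ Real.sqrt ((2 + β) ^ 2 * P.dissk β x k) := by
    intro k hk
    have h1 := P.ak_sq_le_diss β x hβ k hk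
    have h2 : P.ak β x k ^ 2 ≤ (2 + β) ^ 2 * P.dissk β x k := by
      have h2b : (0:ℝ) < 2 + β := by linarith
      have := mul_le_mul_of_nonneg_left h1 (le_of_lt (by positivity : (0:ℝ) < (2+β)^2))
      calc P.ak β x k ^ 2 = (2+β)^2 * ((1 / (2 + β)) ^ 2 * P.ak β x k ^ 2) := by
            field_simp
        _ ≤ (2+β)^2 * P.dissk β x k := by
            apply mul_le_mul_of_nonneg_left h1; positivity
    calc P.ak β x k = Real.sqrt (P.ak β x k ^ 2) := by
          rw [Real.sqrt_sq (by unfold ak; positivity)]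
      _ ≤ Real.sqrt ((2 + β) ^ 2 * P.dissk β x k) := Real.sqrt_le_sqrt h2
  have hlim : Filter.Tendsto (fun k => Real.sqrt ((2 + β) ^ 2 * P.dissk β x k))
      Filter.atTop (nhds 0) := by
    have : Filter.Tendsto (fun k => (2 + β) ^ 2 * P.dissk β x k) Filter.atTop (nhds 0) := by
      have := (P.diss_tendsto β x hβ).const_mul ((2 + β) ^ 2)
      simpa using this
    have h0 : Real.sqrt 0 = 0 := Real.sqrt_zero
    exact h0 ▸ this.sqrt
  apply squeeze_zero' (f := P.ak β x)
  · filter_upwards with k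
    unfold ak; positivity
  · filter_upwards [Filter.eventually_ge_atTop 2] with k hk
    exact hbound k hk
  · exact hlim

end PosContr

end Energy
section Rho

variable {Z : Type*} [NormedAddCommGroup Z] [InnerProductSpace ℝ Z]

namespace PosContr

variable (P : PosContr Z) (β : ℝ) (x : Z)

/-- The operator `B(I-B)` as a `PosContr`. -/
noncomputable def mid : PosContr Z where
  B := P.B - (P.B.comp P.B)
  hsym := by
    intro u v
    simp only [ContinuousLinearMap.sub_apply, ContinuousLinearMap.comp_apply,
      inner_sub_left, inner_sub_right, P.hsym]
  hpos := by
    intro u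
    have := P.normB_sq_le u
    simp only [ContinuousLinearMap.sub_apply, ContinuousLinearMap.comp_apply, inner_sub_left]
    have h2 : ⟪P.B (P.B u), u⟫ = ‖P.B u‖ ^ 2 := by
      rw [P.hsym, real_inner_self_eq_norm_sq]
    rw [h2]; linarith
  hle := by
    intro u
    have h1 := P.hle u
    have h2 : ⟪P.B (P.B u), u⟫ = ‖P.B u‖ ^ 2 := by
      rw [P.hsym, real_inner_self_eq_norm_sq]
    simp only [ContinuousLinearMap.sub_apply, ContinuousLinearMap.comp_apply, inner_sub_left]
    rw [h2]
    have : (0:ℝ) ≤ ‖P.B u‖ ^ 2 := by positivity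
    linarith

lemma mid_apply (u : Z) : (P.mid).B u = P.B u - P.B (P.B u) := rfl

lemma mid_inner (u : Z) : ⟪(P.mid).B u, u⟫ = ⟪P.B u, u⟫ - ‖P.B u‖ ^ 2 := by
  rw [mid_apply, inner_sub_left, P.hsym (P.B u) u, real_inner_self_eq_norm_sq]

lemma BE_bound (hβ : -1 < β) (k : ℕ) :
    ‖P.B (P.Ek β x k)‖ ≤ P.ak β x k + P.ak β x (k+1) := by
  have hid : P.B (P.Ek β x k) = -(P.B (P.Sk β x (k+1)))
      + myAlpha β k • (P.B (P.Sk β x k) - P.B (P.B (P.Sk β x k))) := by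
    rw [P.Sk_succ β x k]
    simp only [map_add, map_neg, map_smul, map_sub]
    abel
  rw [hid]
  calc ‖-(P.B (P.Sk β x (k+1))) + myAlpha β k • (P.B (P.Sk β x k) - P.B (P.B (P.Sk β x k)))‖
      ≤ ‖-(P.B (P.Sk β x (k+1)))‖ + ‖myAlpha β k • (P.B (P.Sk β x k) - P.B (P.B (P.Sk β x k)))‖ :=
        norm_add_le _ _
    _ ≤ P.ak β x (k+1) + P.ak β x k := by
        rw [norm_neg, norm_smul]
        have h1 := P.normIB_le (P.B (P.Sk β x k))
        have h2 : |myAlpha β k| ≤ 1 := by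
          rw [abs_of_nonneg (myAlpha_nonneg β hβ k)]; exact myAlpha_le_one β hβ k
        unfold ak
        have h3 : |myAlpha β k| * ‖P.B (P.Sk β x k) - P.B (P.B (P.Sk β x k))‖
            ≤ 1 * ‖P.B (P.Sk β x k)‖ := by
          apply mul_le_mul h2 h1 (norm_nonneg _) zero_le_one
        rw [Real.norm_eq_abs]
        linarith
    _ = P.ak β x k + P.ak β x (k+1) := by ring

lemma rho_le (hβ : -1 < β) (k : ℕ) :
    ⟪P.B (P.Ek β x k), P.Ek β x k⟫
      ≤ (Real.sqrt (P.bk β x k) + P.ak β x k) ^ 2 + (P.ak β x k + P.ak β x (k+1)) ^ 2 := by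
  set E := P.Ek β x k
  set S := P.Sk β x k
  set u := P.B S with hu
  set a := myAlpha β k
  have hEw : E = P.wk β x k - a • u := by
    unfold E
    rw [wk]; abel
  -- split ⟪BE,E⟫ = ⟪(mid)E, E⟫ + ‖BE‖²
  have hsplit : ⟪P.B E, E⟫ = ⟪(P.mid).B E, E⟫ + ‖P.B E‖ ^ 2 := by
    rw [P.mid_inner]; ring
  -- bound ⟪(mid)E,E⟫
  have hCS := (P.mid).psd_cs (P.wk β x k) u
  have hgw : ⟪(P.mid).B (P.wk β x k), P.wk β x k⟫ = P.bk β x k := by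
    rw [P.mid_inner]; rfl
  have hgu_le : ⟪(P.mid).B u, u⟫ ≤ P.ak β x k ^ 2 := by
    rw [P.mid_inner]
    have h1 := P.hle u
    have h2 : (0:ℝ) ≤ ‖P.B u‖ ^ 2 := by positivity
    have : ⟪P.B u, u⟫ ≤ ‖u‖ ^ 2 := h1
    unfold ak
    rw [← hu]
    linarith
  have hgu_nonneg : 0 ≤ ⟪(P.mid).B u, u⟫ := (P.mid).hpos u
  have hgE : ⟪(P.mid).B E, E⟫
      = ⟪(P.mid).B (P.wk β x k), P.wk β x k⟫ - 2 * a * ⟪(P.mid).B (P.wk β x k), u⟫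
        + a ^ 2 * ⟪(P.mid).B u, u⟫ := by
    rw [hEw]
    simp only [map_sub, map_smul, inner_sub_left, inner_sub_right,
      inner_smul_left, inner_smul_right, conj_trivial]
    have hsw : ⟪(P.mid).B u, P.wk β x k⟫ = ⟪(P.mid).B (P.wk β x k), u⟫ := by
      rw [(P.mid).hsym u (P.wk β x k), real_inner_comm]
    rw [hsw]
    ring
  -- Cauchy-Schwarz bound on cross term
  have hcross : |⟪(P.mid).B (P.wk β x k), u⟫| ≤ Real.sqrt (P.bk β x k) * P.ak β x k := by
    have h1 : ⟪(P.mid).B (P.wk β x k), u⟫ ^ 2 ≤ P.bk β x k * P.ak β x k ^ 2 := by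
      calc ⟪(P.mid).B (P.wk β x k), u⟫ ^ 2
          ≤ ⟪(P.mid).B (P.wk β x k), P.wk β x k⟫ * ⟪(P.mid).B u, u⟫ := hCS
        _ ≤ P.bk β x k * P.ak β x k ^ 2 := by
            rw [hgw]
            apply mul_le_mul_of_nonneg_left hgu_le (P.bk_nonneg β x k)
    have h2 : Real.sqrt (⟪(P.mid).B (P.wk β x k), u⟫ ^ 2)
        ≤ Real.sqrt (P.bk β x k * P.ak β x k ^ 2) := Real.sqrt_le_sqrt h1
    rw [Real.sqrt_sq_eq_abs] at h2
    rw [Real.sqrt_mul (P.bk_nonneg β x k), Real.sqrt_sq (by unfold ak; positivity)] at h2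
    exact h2
  have ha0 := myAlpha_nonneg β hβ k
  have ha1 := myAlpha_le_one β hβ k
  have hBE := P.BE_bound β x hβ k
  have hBE2 : ‖P.B E‖ ^ 2 ≤ (P.ak β x k + P.ak β x (k+1)) ^ 2 := by
    have h0 : (0:ℝ) ≤ ‖P.B E‖ := norm_nonneg _
    nlinarith
  rw [hsplit]
  have hmidE : ⟪(P.mid).B E, E⟫ ≤ (Real.sqrt (P.bk β x k) + P.ak β x k) ^ 2 := by
    rw [hgE, hgw]
    have habs := abs_le.mp hcross
    have hs2 : Real.sqrt (P.bk β x k) ^ 2 = P.bk β x k :=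
      Real.sq_sqrt (P.bk_nonneg β x k)
    have hak0 : 0 ≤ P.ak β x k := by unfold ak; positivity
    have hs0 : 0 ≤ Real.sqrt (P.bk β x k) := Real.sqrt_nonneg _
    have hexp : (Real.sqrt (P.bk β x k) + P.ak β x k) ^ 2
        = P.bk β x k + 2 * (Real.sqrt (P.bk β x k) * P.ak β x k) + P.ak β x k ^ 2 := by
      rw [add_sq, hs2]; ring
    have t1 : -(2 * a * ⟪(P.mid).B (P.wk β x k), u⟫)
        ≤ 2 * a * (Real.sqrt (P.bk β x k) * P.ak β x k) := by
      have := habs.1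
      nlinarith
    have t2 : 2 * a * (Real.sqrt (P.bk β x k) * P.ak β x k)
        ≤ 2 * (Real.sqrt (P.bk β x k) * P.ak β x k) := by
      have hprod : 0 ≤ Real.sqrt (P.bk β x k) * P.ak β x k := mul_nonneg hs0 hak0
      nlinarith
    have t3 : a ^ 2 * ⟪(P.mid).B u, u⟫ ≤ ⟪(P.mid).B u, u⟫ := by
      have ha2 : a ^ 2 ≤ 1 := by nlinarith
      calc a ^ 2 * ⟪(P.mid).B u, u⟫ ≤ 1 * ⟪(P.mid).B u, u⟫ :=
            mul_le_mul_of_nonneg_right ha2 hgu_nonneg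
        _ = ⟪(P.mid).B u, u⟫ := one_mul _
    rw [hexp]
    linarith [hgu_le]
  linarith

lemma rho_tendsto (hβ : -1 < β) :
    Filter.Tendsto (fun k => ⟪P.B (P.Ek β x k), P.Ek β x k⟫) Filter.atTop (nhds 0) := by
  have ha := P.ak_tendsto β x hβ
  have hb := P.bk_tendsto β x hβ
  have ha' : Filter.Tendsto (fun k => P.ak β x (k+1)) Filter.atTop (nhds 0) :=
    ha.comp (Filter.tendsto_add_atTop_nat 1)
  have hlim : Filter.Tendsto
      (fun k => (Real.sqrt (P.bk β x k) + P.ak β x k) ^ 2 + (P.ak β x k + P.ak β x (k+1)) ^ 2)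
      Filter.atTop (nhds 0) := by
    have h1 : Filter.Tendsto (fun k => Real.sqrt (P.bk β x k)) Filter.atTop (nhds 0) := by
      have := hb.sqrt
      simpa using this
    have h2 := (h1.add ha).pow 2
    have h3 := (ha.add ha').pow 2
    simpa using h2.add h3
  apply squeeze_zero (fun k => P.hpos _) (fun k => P.rho_le β x hβ k) hlim

end PosContr

end Rho
section Noise

variable {Z : Type*} [NormedAddCommGroup Z] [InnerProductSpace ℝ Z]

namespace PosContr

variable (P : PosContr Z) (β : ℝ)

lemma esP_add (x x' : Z) : ∀ k : ℕ, esP P β (x + x') k = esP P β x k + esP P β x' k := by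
  intro k
  induction k with
  | zero => simp [esP, Prod.ext_iff]
  | succ n ih =>
    simp only [esP, ih, Prod.fst_add, Prod.snd_add, Prod.mk_add_mk, Prod.mk.injEq]
    constructor
    · simp only [map_add, map_sub, smul_add, smul_sub]; abel
    · simp only [map_add, map_sub, smul_add, smul_sub]; abel

/-- velocity identity : `E_{k+1} - E_k = B S_{k+1}`. -/
lemma vel_eq (x : Z) (k : ℕ) :
    P.Ek β x (k+1) - P.Ek β x k = P.B (P.Sk β x (k+1)) := by
  rw [Ek_succ, Sk_succ, wk]
  simp only [map_add, map_neg, map_smul, map_sub, smul_sub]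
  abel

noncomputable def Dk (η : Z) (k : ℕ) : Z := (ddP P β η k).1

lemma Dk_zero (η : Z) : P.Dk β η 0 = 0 := rfl

lemma dd_snd (η : Z) (k : ℕ) : (ddP P β η (k+1)).2 = P.Dk β η k := rfl

lemma Dk_succ (η : Z) (k : ℕ) :
    P.Dk β η (k+1) =
      (P.Dk β η k + myAlpha β k • (P.Dk β η k - (ddP P β η k).2))
      - P.B (P.Dk β η k + myAlpha β k • (P.Dk β η k - (ddP P β η k).2)) + η := rfl

/-- `B D_k + E_k = η`. -/
lemma BD_add_E (η : Z) : ∀ k : ℕ, P.B (P.Dk β η k) + P.Ek β η k = η := by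
  have key : ∀ k : ℕ, P.B (P.Dk β η (k+1)) + P.Ek β η (k+1) = η
      ∧ P.B (P.Dk β η k) + P.Ek β η k = η := by
    intro k
    induction k with
    | zero =>
      constructor
      · show P.B ((0 + myAlpha β 0 • ((0:Z) - 0)) - P.B (0 + myAlpha β 0 • ((0:Z) - 0)) + η)
            + P.Ek β η 1 = η
        rw [Ek_succ, wk, Ek_zero, Sk_zero]
        simp
      · show P.B 0 + P.Ek β η 0 = η
        rw [Ek_zero]; simp
    | succ n ih =>
      refine ⟨?_, ih.1⟩
      have h1 := ih.1
      have h2 := ih.2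
      have hvel := P.vel_eq β η n
      -- goal : B D_{n+2} + E_{n+2} = η
      rw [P.Dk_succ β η (n+1), P.Ek_succ β η (n+1), dd_snd]
      rw [wk]
      set a := myAlpha β (n+1)
      set D1 := P.Dk β η (n+1)
      set D0 := P.Dk β η n
      set E1 := P.Ek β η (n+1)
      set S1 := P.Sk β η (n+1)
      set ζ := D1 + a • (D1 - D0) with hζ
      set w := E1 + a • P.B S1 with hw
      have hBS : P.B S1 = E1 - P.Ek β η n := by rw [← hvel]
      have hsum : P.B ζ + w = η := by
        rw [hζ, hw, hBS]
        simp only [map_add, map_smul, map_sub, smul_sub]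
        have e1 : P.B D1 + E1 = η := h1
        have e0 : P.B D0 + P.Ek β η n = η := h2
        calc P.B D1 + (a • P.B D1 - a • P.B D0) + (E1 + (a • E1 - a • P.Ek β η n))
            = (P.B D1 + E1) + a • (P.B D1 + E1) - a • (P.B D0 + P.Ek β η n) := by
              simp only [smul_add]; abel
          _ = η + a • η - a • η := by rw [e1, e0]
          _ = η := by abel
      calc P.B (ζ - P.B ζ + η) + (w - P.B w)
          = (P.B ζ + w) - P.B (P.B ζ + w) + P.B η := by
            simp only [map_add, map_sub]; abel
        _ = η - P.B η + P.B η := by rw [hsum]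
        _ = η := by abel
  intro k
  cases k with
  | zero => exact (key 0).2
  | succ n => exact (key n).1

lemma BD_eq (η : Z) (k : ℕ) : P.B (P.Dk β η k) = η - P.Ek β η k :=
  eq_sub_of_add_eq (P.BD_add_E β η k)

lemma BD_norm_le (hβ : -1 < β) (η : Z) (k : ℕ) : ‖P.B (P.Dk β η k)‖ ≤ 2 * ‖η‖ := by
  rw [P.BD_eq β η k]
  calc ‖η - P.Ek β η k‖ ≤ ‖η‖ + ‖P.Ek β η k‖ := norm_sub_le _ _
    _ ≤ ‖η‖ + ‖η‖ := by
        have := P.Ek_norm_le β η hβ k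
        linarith
    _ = 2 * ‖η‖ := by ring

lemma Dk_diff_le (hβ : -1 < β) (η : Z) :
    ∀ k : ℕ, ‖P.Dk β η (k+1) - P.Dk β η k‖ ≤ 7 * ((k:ℝ)+1) * ‖η‖ := by
  intro k
  induction k with
  | zero =>
    have h0 : P.Dk β η 1 = η := by
      rw [P.Dk_succ β η 0]
      show (0 + myAlpha β 0 • ((0:Z) - 0)) - P.B (0 + myAlpha β 0 • ((0:Z) - 0)) + η = η
      simp
    rw [h0, Dk_zero]
    simp
    linarith [norm_nonneg η]
  | succ n ih =>
    push_cast
    set a := myAlpha β (n+1)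
    set D1 := P.Dk β η (n+1)
    set D0 := P.Dk β η n
    set ζ := D1 + a • (D1 - D0) with hζ
    have hstep : P.Dk β η (n+2) - D1 = a • (D1 - D0) - P.B ζ + η := by
      rw [P.Dk_succ β η (n+1), dd_snd, hζ]
      abel
    have ha0 := myAlpha_nonneg β hβ (n+1)
    have ha1 := myAlpha_le_one β hβ (n+1)
    have hBζ : ‖P.B ζ‖ ≤ 4 * ‖η‖ := by
      have h1 : P.B ζ = P.B D1 + a • (P.B D1 - P.B D0) := by
        rw [hζ]; simp only [map_add, map_smul, map_sub]
      rw [h1]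
      have h2 := P.BD_norm_le β hβ η (n+1)
      have h3 : ‖P.B D1 - P.B D0‖ ≤ 2 * ‖η‖ := by
        rw [P.BD_eq β η (n+1), P.BD_eq β η n]
        have e1 := P.Ek_norm_le β η hβ (n+1)
        have e0 := P.Ek_norm_le β η hβ n
        calc ‖η - P.Ek β η (n+1) - (η - P.Ek β η n)‖ = ‖P.Ek β η n - P.Ek β η (n+1)‖ := by
              congr 1; abel
          _ ≤ ‖P.Ek β η n‖ + ‖P.Ek β η (n+1)‖ := norm_sub_le _ _
          _ ≤ 2 * ‖η‖ := by linarith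
      calc ‖P.B D1 + a • (P.B D1 - P.B D0)‖ ≤ ‖P.B D1‖ + ‖a • (P.B D1 - P.B D0)‖ :=
            norm_add_le _ _
        _ ≤ 2 * ‖η‖ + 1 * (2 * ‖η‖) := by
            rw [norm_smul, Real.norm_eq_abs, abs_of_nonneg ha0]
            have : a * ‖P.B D1 - P.B D0‖ ≤ 1 * (2 * ‖η‖) := by
              apply mul_le_mul ha1 h3 (norm_nonneg _) zero_le_one
            linarith
        _ = 4 * ‖η‖ := by ring
    have hdiff : ‖a • (D1 - D0)‖ ≤ 7 * ((n:ℝ)+1) * ‖η‖ := by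
      rw [norm_smul, Real.norm_eq_abs, abs_of_nonneg ha0]
      calc a * ‖D1 - D0‖ ≤ 1 * (7 * ((n:ℝ)+1) * ‖η‖) :=
            mul_le_mul ha1 ih (norm_nonneg _) zero_le_one
        _ = 7 * ((n:ℝ)+1) * ‖η‖ := one_mul _
    rw [hstep]
    calc ‖a • (D1 - D0) - P.B ζ + η‖ ≤ ‖a • (D1 - D0) - P.B ζ‖ + ‖η‖ := norm_add_le _ _
      _ ≤ ‖a • (D1 - D0)‖ + ‖P.B ζ‖ + ‖η‖ := by
          have := norm_sub_le (a • (D1 - D0)) (P.B ζ)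
          linarith
      _ ≤ 7 * ((n:ℝ)+1) * ‖η‖ + 4 * ‖η‖ + ‖η‖ := by linarith
      _ ≤ 7 * ((n:ℝ)+1+1) * ‖η‖ := by
          have := norm_nonneg η
          nlinarith

lemma Dk_norm_le (hβ : -1 < β) (η : Z) : ∀ k : ℕ, ‖P.Dk β η k‖ ≤ 7 * (k:ℝ)^2 * ‖η‖ := by
  intro k
  induction k with
  | zero => simp [Dk_zero]
  | succ n ih =>
    push_cast
    have h1 := P.Dk_diff_le β hβ η n
    calc ‖P.Dk β η (n+1)‖ = ‖(P.Dk β η (n+1) - P.Dk β η n) + P.Dk β η n‖ := by congr 1; abel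
      _ ≤ ‖P.Dk β η (n+1) - P.Dk β η n‖ + ‖P.Dk β η n‖ := norm_add_le _ _
      _ ≤ 7 * ((n:ℝ)+1) * ‖η‖ + 7 * (n:ℝ)^2 * ‖η‖ := by linarith
      _ ≤ 7 * ((n:ℝ)+1)^2 * ‖η‖ := by
          have := norm_nonneg η
          nlinarith

lemma inner_BD_le (hβ : -1 < β) (η : Z) (k : ℕ) :
    ⟪P.B (P.Dk β η k), P.Dk β η k⟫ ≤ 14 * (k:ℝ)^2 * ‖η‖^2 := by
  calc ⟪P.B (P.Dk β η k), P.Dk β η k⟫ ≤ ‖P.B (P.Dk β η k)‖ * ‖P.Dk β η k‖ :=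
        real_inner_le_norm _ _
    _ ≤ (2 * ‖η‖) * (7 * (k:ℝ)^2 * ‖η‖) := by
        apply mul_le_mul (P.BD_norm_le β hβ η k) (P.Dk_norm_le β hβ η k)
          (norm_nonneg _) (by positivity)
    _ = 14 * (k:ℝ)^2 * ‖η‖^2 := by ring

end PosContr

end Noise
section Concrete

theorem twoStepInd {P : ℕ → Prop} (h0 : P 0) (h1 : P 1)
    (ih : ∀ k, P k → P (k+1) → P (k+2)) : ∀ k, P k := by
  have key : ∀ k, P k ∧ P (k+1) := by
    intro k
    induction k with
    | zero => exact ⟨h0, h1⟩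
    | succ n ihn => exact ⟨ihn.2, ih n ihn.1 ihn.2⟩
  exact fun k => (key k).1

variable {X Y : Type*}
  [NormedAddCommGroup X] [InnerProductSpace ℝ X] [CompleteSpace X]
  [NormedAddCommGroup Y] [InnerProductSpace ℝ Y] [CompleteSpace Y]
  (A : X →L[ℝ] Y)

local notation "A†" => ContinuousLinearMap.adjoint A

lemma normA_le (hA : ‖(ContinuousLinearMap.adjoint A).comp A‖ ≤ 1) (u : X) :
    ‖A u‖ ≤ ‖u‖ := by
  have h1 : ‖A u‖ ^ 2 = ⟪((ContinuousLinearMap.adjoint A).comp A) u, u⟫ := by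
    rw [ContinuousLinearMap.comp_apply, ContinuousLinearMap.adjoint_inner_left,
      real_inner_self_eq_norm_sq]
  have h2 : ⟪((ContinuousLinearMap.adjoint A).comp A) u, u⟫ ≤ ‖u‖ ^ 2 := by
    calc ⟪((ContinuousLinearMap.adjoint A).comp A) u, u⟫
        ≤ ‖((ContinuousLinearMap.adjoint A).comp A) u‖ * ‖u‖ := real_inner_le_norm _ _
      _ ≤ (‖(ContinuousLinearMap.adjoint A).comp A‖ * ‖u‖) * ‖u‖ := by
          apply mul_le_mul_of_nonneg_right (ContinuousLinearMap.le_opNorm _ u) (norm_nonneg u)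
      _ ≤ (1 * ‖u‖) * ‖u‖ := by
          apply mul_le_mul_of_nonneg_right
            (mul_le_mul_of_nonneg_right hA (norm_nonneg u)) (norm_nonneg u)
      _ = ‖u‖ ^ 2 := by ring
  nlinarith [norm_nonneg (A u), norm_nonneg u]

lemma normAt_le (hA : ‖(ContinuousLinearMap.adjoint A).comp A‖ ≤ 1) (v : Y) :
    ‖A† v‖ ≤ ‖v‖ := by
  have h1 : ‖A† v‖ ^ 2 = ⟪v, A (A† v)⟫ := by
    rw [← real_inner_self_eq_norm_sq, ContinuousLinearMap.adjoint_inner_left]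
  have h2 : ⟪v, A (A† v)⟫ ≤ ‖v‖ * ‖A† v‖ := by
    calc ⟪v, A (A† v)⟫ ≤ ‖v‖ * ‖A (A† v)‖ := real_inner_le_norm _ _
      _ ≤ ‖v‖ * ‖A† v‖ := by
          apply mul_le_mul_of_nonneg_left (normA_le A hA _) (norm_nonneg v)
  nlinarith [norm_nonneg (A† v), norm_nonneg v]

/-- `T = A* A` as a `PosContr` on `X`. -/
noncomputable def TP (hA : ‖(ContinuousLinearMap.adjoint A).comp A‖ ≤ 1) : PosContr X where
  B := (ContinuousLinearMap.adjoint A).comp A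
  hsym := by
    intro u v
    rw [ContinuousLinearMap.comp_apply, ContinuousLinearMap.comp_apply,
      ContinuousLinearMap.adjoint_inner_left, ContinuousLinearMap.adjoint_inner_right]
  hpos := by
    intro u
    rw [ContinuousLinearMap.comp_apply, ContinuousLinearMap.adjoint_inner_left]
    exact real_inner_self_nonneg
  hle := by
    intro u
    rw [ContinuousLinearMap.comp_apply, ContinuousLinearMap.adjoint_inner_left,
      real_inner_self_eq_norm_sq]
    have := normA_le A hA u
    nlinarith [norm_nonneg (A u), norm_nonneg u]

/-- `B = A A*` as a `PosContr` on `Y`. -/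
noncomputable def BP (hA : ‖(ContinuousLinearMap.adjoint A).comp A‖ ≤ 1) : PosContr Y where
  B := A.comp (ContinuousLinearMap.adjoint A)
  hsym := by
    intro u v
    rw [ContinuousLinearMap.comp_apply, ContinuousLinearMap.comp_apply,
      ← ContinuousLinearMap.adjoint_inner_left, ← ContinuousLinearMap.adjoint_inner_right]
  hpos := by
    intro u
    rw [ContinuousLinearMap.comp_apply, ← ContinuousLinearMap.adjoint_inner_right]
    exact real_inner_self_nonneg
  hle := by
    intro u
    rw [ContinuousLinearMap.comp_apply, ← ContinuousLinearMap.adjoint_inner_right,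
      real_inner_self_eq_norm_sq]
    have := normAt_le A hA u
    nlinarith [norm_nonneg (A† u), norm_nonneg u]

variable (hA : ‖(ContinuousLinearMap.adjoint A).comp A‖ ≤ 1) (β : ℝ)

lemma step_sub (z₁ z₂ : X) (y₁ y₂ : Y) :
    (z₁ + A† (y₁ - A z₁)) - (z₂ + A† (y₂ - A z₂))
      = (z₁ - z₂) + A† ((y₁ - y₂) - A (z₁ - z₂)) := by
  simp only [map_sub]
  abel

lemma iter_sub (y₁ y₂ : Y) :
    ∀ k, nesterovIter β A y₁ k - nesterovIter β A y₂ k = nesterovIter β A (y₁ - y₂) k := by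
  apply twoStepInd
  · simp [nesterovIter]
  · simp [nesterovIter]
  · intro k ih0 ih1
    simp only [nesterovIter]
    rw [step_sub A]
    have hz : (nesterovIter β A y₁ (k+1) + nesterovAlpha β (k+1) •
          (nesterovIter β A y₁ (k+1) - nesterovIter β A y₁ k))
        - (nesterovIter β A y₂ (k+1) + nesterovAlpha β (k+1) •
          (nesterovIter β A y₂ (k+1) - nesterovIter β A y₂ k))
        = nesterovIter β A (y₁ - y₂) (k+1) + nesterovAlpha β (k+1) •
          (nesterovIter β A (y₁ - y₂) (k+1) - nesterovIter β A (y₁ - y₂) k) := by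
      rw [← ih0, ← ih1]
      simp only [smul_sub]
      abel
    rw [hz]

/-- Identification of the noise-free error with the abstract `E` system. -/
lemma iter_exact (x : X) :
    ∀ k, nesterovIter β A (A x) k = x - (TP A hA).Ek β x k := by
  apply twoStepInd
  · rw [PosContr.Ek_zero]; simp [nesterovIter]
  · show A† (A x) = x - (TP A hA).Ek β x 1
    rw [PosContr.Ek_succ, PosContr.wk, PosContr.Ek_zero, PosContr.Sk_zero]
    simp only [map_zero, smul_zero, add_zero]
    show A† (A x) = x - (x - (TP A hA).B x)
    have : (TP A hA).B x = A† (A x) := rfl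
    rw [this]; abel
  · intro k ih0 ih1
    have hvel := (TP A hA).vel_eq β x k
    set E0 := (TP A hA).Ek β x k
    set E1 := (TP A hA).Ek β x (k+1)
    set w := (TP A hA).wk β x (k+1) with hw
    have hwE : w = E1 + nesterovAlpha β (k+1) • (E1 - E0) := by
      rw [hw, PosContr.wk, ← hvel]
      simp [myAlpha]
      rfl
    show (nesterovIter β A (A x) (k+1) + nesterovAlpha β (k+1) •
        (nesterovIter β A (A x) (k+1) - nesterovIter β A (A x) k)) +
        A† ((A x) - A ((nesterovIter β A (A x) (k+1) + nesterovAlpha β (k+1) •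
        (nesterovIter β A (A x) (k+1) - nesterovIter β A (A x) k))))
        = x - (TP A hA).Ek β x (k+2)
    rw [ih0, ih1]
    have hz : (x - E1) + nesterovAlpha β (k+1) • ((x - E1) - (x - E0)) = x - w := by
      rw [hwE]
      simp only [smul_sub]
      abel
    rw [hz]
    have hT : ∀ u : X, A† (A u) = (TP A hA).B u := fun _ => rfl
    rw [PosContr.Ek_succ, ← hw]
    rw [← map_sub A (x) (x - w), hT]
    have : x - (x - w) = w := by abel
    rw [this]
    abel

lemma Dk_one (η : Y) : (BP A hA).Dk β η 1 = η := by
  rw [PosContr.Dk_succ]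
  show (0 + myAlpha β 0 • ((0:Y) - 0)) - (BP A hA).B (0 + myAlpha β 0 • ((0:Y) - 0)) + η = η
  simp

/-- Identification of the pure-noise iteration with the abstract `D` system. -/
lemma iter_noise (η : Y) :
    ∀ k, nesterovIter β A η k = A† ((BP A hA).Dk β η k) := by
  apply twoStepInd
  · rw [PosContr.Dk_zero]; simp [nesterovIter]
  · rw [Dk_one]; rfl
  · intro k ih0 ih1
    set D0 := (BP A hA).Dk β η k
    set D1 := (BP A hA).Dk β η (k+1)
    set a := nesterovAlpha β (k+1)
    have ha : myAlpha β (k+1) = a := by simp [myAlpha, a]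
    show (nesterovIter β A η (k+1) + a •
        (nesterovIter β A η (k+1) - nesterovIter β A η k)) +
        A† (η - A ((nesterovIter β A η (k+1) + a •
        (nesterovIter β A η (k+1) - nesterovIter β A η k))))
        = A† ((BP A hA).Dk β η (k+2))
    rw [ih0, ih1]
    have hz : A† D1 + a • (A† D1 - A† D0) = A† (D1 + a • (D1 - D0)) := by
      simp only [map_add, map_smul, map_sub]
    rw [hz]
    have hD2 : (BP A hA).Dk β η (k+2)
        = (D1 + a • (D1 - D0)) - (BP A hA).B (D1 + a • (D1 - D0)) + η := by
      rw [PosContr.Dk_succ, PosContr.dd_snd, ha]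
    rw [hD2]
    have hB : ∀ v : Y, A (A† v) = (BP A hA).B v := fun _ => rfl
    rw [hB, ← map_add]
    congr 1
    abel

/-- Intertwining: the `X`-error system applied to `A† w` is `A†` of the `Y`-system. -/
lemma es_intertwine (w : Y) :
    ∀ k, esP (TP A hA) β (A† w) k
      = (A† ((esP (BP A hA) β w k).1), A† ((esP (BP A hA) β w k).2)) := by
  intro k
  induction k with
  | zero => simp [esP]
  | succ n ih =>
    have hT : ∀ v : Y, (TP A hA).B (A† v) = A† ((BP A hA).B v) := fun _ => rfl
    set EY := (esP (BP A hA) β w n).1 with hEY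
    set SY := (esP (BP A hA) β w n).2 with hSY
    have h1 : (esP (TP A hA) β (A† w) n).1 = A† EY := by rw [ih]
    have h2 : (esP (TP A hA) β (A† w) n).2 = A† SY := by rw [ih]
    have hwX : (esP (TP A hA) β (A† w) n).1
          + myAlpha β n • (TP A hA).B ((esP (TP A hA) β (A† w) n).2)
        = A† (EY + myAlpha β n • (BP A hA).B SY) := by
      rw [h1, h2, hT, map_add, map_smul]
    simp only [esP]
    rw [Prod.mk.injEq]
    constructor
    · rw [hwX, hT, ← map_sub]
    · rw [h1, h2, hT, ← map_sub, ← map_smul, ← map_neg, ← map_add]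

end Concrete
section Final

variable {X Y : Type*}
  [NormedAddCommGroup X] [InnerProductSpace ℝ X] [CompleteSpace X]
  [NormedAddCommGroup Y] [InnerProductSpace ℝ Y] [CompleteSpace Y]
  (A : X →L[ℝ] Y)

local notation "A†" => ContinuousLinearMap.adjoint A

variable (β : ℝ)

lemma normAt_sq (hA : ‖(ContinuousLinearMap.adjoint A).comp A‖ ≤ 1) (v : Y) : ‖A† v‖ ^ 2 = ⟪(BP A hA).B v, v⟫ := by
  rw [← real_inner_self_eq_norm_sq, ContinuousLinearMap.adjoint_inner_left]
  exact real_inner_comm _ _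

lemma iter_noise_norm_le (hA : ‖(ContinuousLinearMap.adjoint A).comp A‖ ≤ 1) (hβ : -1 < β) (η : Y) (k : ℕ) :
    ‖nesterovIter β A η k‖ ≤ 4 * (k:ℝ) * ‖η‖ := by
  rw [iter_noise A hA β η k]
  have h1 : ‖A† ((BP A hA).Dk β η k)‖ ^ 2 ≤ 14 * (k:ℝ)^2 * ‖η‖^2 := by
    rw [normAt_sq A hA]
    exact (BP A hA).inner_BD_le β hβ η k
  have h2 : (0:ℝ) ≤ ‖A† ((BP A hA).Dk β η k)‖ := norm_nonneg _
  have h3 : (0:ℝ) ≤ (k:ℝ) := Nat.cast_nonneg k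
  have h4 : (0:ℝ) ≤ ‖η‖ := norm_nonneg η
  nlinarith [sq_nonneg (‖A† ((BP A hA).Dk β η k)‖ - 4 * (k:ℝ) * ‖η‖),
    sq_nonneg (‖A† ((BP A hA).Dk β η k)‖ + 4 * (k:ℝ) * ‖η‖), mul_nonneg h3 h4]

lemma exact_tendsto (hA : ‖(ContinuousLinearMap.adjoint A).comp A‖ ≤ 1) (hβ : -1 < β) (xdag : X)
    (hmin : xdag ∈ closure (Set.range (ContinuousLinearMap.adjoint A))) :
    Filter.Tendsto (fun k => ‖nesterovIter β A (A xdag) k - xdag‖)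
      Filter.atTop (nhds 0) := by
  rw [Metric.tendsto_atTop]
  intro ε hε
  obtain ⟨v, hvmem, hvdist⟩ := Metric.mem_closure_iff.mp hmin (ε/2) (by linarith)
  obtain ⟨w, rfl⟩ := hvmem
  set h := xdag - A† w with hh
  have hhn : ‖h‖ < ε/2 := by rw [hh, ← dist_eq_norm]; exact hvdist
  have hrho := (BP A hA).rho_tendsto β w hβ
  rw [Metric.tendsto_atTop] at hrho
  obtain ⟨N, hN⟩ := hrho ((ε/2)^2) (by positivity)
  refine ⟨N, fun k hk => ?_⟩
  rw [Real.dist_eq, sub_zero, abs_of_nonneg (norm_nonneg _)]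
  have hxsum : A† w + h = xdag := by rw [hh]; abel
  have hEdec : (TP A hA).Ek β xdag k
      = (TP A hA).Ek β (A† w) k + (TP A hA).Ek β h k := by
    unfold PosContr.Ek
    rw [← hxsum, (TP A hA).esP_add β (A† w) h k]
    rfl
  have hiter : nesterovIter β A (A xdag) k - xdag = -((TP A hA).Ek β xdag k) := by
    rw [iter_exact A hA β xdag k]; abel
  rw [hiter, norm_neg, hEdec]
  have hb1 : ‖(TP A hA).Ek β (A† w) k‖ < ε/2 := by
    have hident : (TP A hA).Ek β (A† w) k = A† ((BP A hA).Ek β w k) := by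
      unfold PosContr.Ek
      rw [es_intertwine A hA β w k]
    rw [hident]
    have hρ := hN k hk
    rw [Real.dist_eq, sub_zero] at hρ
    have hρnn : 0 ≤ ⟪(BP A hA).B ((BP A hA).Ek β w k), (BP A hA).Ek β w k⟫ :=
      (BP A hA).hpos _
    have hρlt : ⟪(BP A hA).B ((BP A hA).Ek β w k), (BP A hA).Ek β w k⟫ < (ε/2)^2 := by
      rwa [abs_of_nonneg hρnn] at hρ
    have hsq : ‖A† ((BP A hA).Ek β w k)‖ ^ 2 < (ε/2)^2 := by
      rw [normAt_sq A hA]; exact hρlt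
    nlinarith [norm_nonneg (A† ((BP A hA).Ek β w k))]
  have hb2 : ‖(TP A hA).Ek β h k‖ < ε/2 :=
    lt_of_le_of_lt ((TP A hA).Ek_norm_le β h hβ k) hhn
  calc ‖(TP A hA).Ek β (A† w) k + (TP A hA).Ek β h k‖
      ≤ ‖(TP A hA).Ek β (A† w) k‖ + ‖(TP A hA).Ek β h k‖ := norm_add_le _ _
    _ < ε := by linarith

end Final

theorem nesterov_convergence {X Y : Type*}
    [NormedAddCommGroup X] [InnerProductSpace ℝ X] [CompleteSpace X]
    [NormedAddCommGroup Y] [InnerProductSpace ℝ Y] [CompleteSpace Y]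
    (A : X →L[ℝ] Y) (hA : ‖(ContinuousLinearMap.adjoint A).comp A‖ ≤ 1)
    (β : ℝ) (hβ : -1 < β) (xdag : X) (y : Y) (hy : A xdag = y)
    (hmin : xdag ∈ closure (Set.range (ContinuousLinearMap.adjoint A)))
    (yδ : ℝ → Y) (hnoise : ∀ δ : ℝ, 0 < δ → ‖y - yδ δ‖ ≤ δ)
    (kstop : ℝ → ℕ)
    (hkinf : Filter.Tendsto kstop (nhdsWithin 0 (Set.Ioi 0)) Filter.atTop)
    (hkδ : Filter.Tendsto (fun δ : ℝ => δ * (kstop δ : ℝ))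
      (nhdsWithin 0 (Set.Ioi 0)) (nhds 0)) :
    Filter.Tendsto (fun δ : ℝ => ‖nesterovIter β A (yδ δ) (kstop δ) - xdag‖)
      (nhdsWithin 0 (Set.Ioi 0)) (nhds 0) := by
  rw [Metric.tendsto_nhds]
  intro ε hε
  have hex := exact_tendsto A β hA hβ xdag hmin
  rw [Metric.tendsto_atTop] at hex
  obtain ⟨K, hK⟩ := hex (ε/2) (by linarith)
  have h1 : ∀ᶠ δ in nhdsWithin 0 (Set.Ioi 0), K ≤ kstop δ :=
    hkinf.eventually_ge_atTop K
  have h2 : ∀ᶠ δ in nhdsWithin 0 (Set.Ioi 0), dist (δ * (kstop δ : ℝ)) 0 < ε/8 :=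
    Metric.tendsto_nhds.mp hkδ (ε/8) (by linarith)
  have h3 : ∀ᶠ δ in nhdsWithin (0:ℝ) (Set.Ioi 0), δ ∈ Set.Ioi (0:ℝ) :=
    eventually_mem_nhdsWithin
  filter_upwards [h1, h2, h3] with δ hKδ hkd hδpos
  rw [Real.dist_eq, sub_zero, abs_of_nonneg (norm_nonneg _)]
  have hδ0 : (0:ℝ) < δ := hδpos
  set k := kstop δ with hkdef
  have hsplit : nesterovIter β A (yδ δ) k - xdag
      = nesterovIter β A (yδ δ - y) k + (nesterovIter β A y k - xdag) := by
    rw [← iter_sub A β (yδ δ) y k]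
    abel
  have hnoisebd : ‖nesterovIter β A (yδ δ - y) k‖ < ε/2 := by
    have hb := iter_noise_norm_le A β hA hβ (yδ δ - y) k
    have hd : ‖yδ δ - y‖ ≤ δ := by
      rw [norm_sub_rev]; exact hnoise δ hδ0
    have hkd' : δ * (k:ℝ) < ε/8 := by
      rw [Real.dist_eq, sub_zero] at hkd
      calc δ * (k:ℝ) ≤ |δ * (k:ℝ)| := le_abs_self _
        _ < ε/8 := hkd
    have hknn : (0:ℝ) ≤ (k:ℝ) := Nat.cast_nonneg k
    calc ‖nesterovIter β A (yδ δ - y) k‖ ≤ 4 * (k:ℝ) * ‖yδ δ - y‖ := hb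
      _ ≤ 4 * (k:ℝ) * δ := by
          apply mul_le_mul_of_nonneg_left hd
          positivity
      _ = 4 * (δ * (k:ℝ)) := by ring
      _ < 4 * (ε/8) := by linarith
      _ = ε/2 := by ring
  have hexactbd : ‖nesterovIter β A y k - xdag‖ < ε/2 := by
    have := hK k hKδ
    rw [Real.dist_eq, sub_zero, abs_of_nonneg (norm_nonneg _)] at this
    rwa [hy] at this
  calc ‖nesterovIter β A (yδ δ) k - xdag‖
      = ‖nesterovIter β A (yδ δ - y) k + (nesterovIter β A y k - xdag)‖ := by rw [hsplit]
    _ ≤ ‖nesterovIter β A (yδ δ - y) k‖ + ‖nesterovIter β A y k - xdag‖ := norm_add_le _ _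
    _ < ε := by linarith
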